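/- For every odd n ≥ 5, the number of equivalence classes under ≈ of two-layer comparator networks on n channels with first layer F_n satisfies |R(G_n)| = |R(G_{n−1})| + 2·|R(G_{n−2})|. -/

import Mathlib

set_option maxHeartbeats 1000000


namespace SN

open scoped Classical

/-- A comparator on `n` channels: a pair of channels. -/
abbrev Comp (n : ℕ) := Fin n × Fin n

/-- A layer is a finite set of comparators. -/
abbrev Layer (n : ℕ) := Finset (Comp n)

/-- A comparator network is a sequence (list) of layers; its depth is the length. -/
abbrev Net (n : ℕ) := List (Layer n)

/-- Each channel is used by at most one comparator of the layer. -/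
def NoOverlap {n : ℕ} (L : Layer n) : Prop :=
  ∀ c ∈ L, ∀ c' ∈ L, c ≠ c' →
    c.1 ≠ c'.1 ∧ c.1 ≠ c'.2 ∧ c.2 ≠ c'.1 ∧ c.2 ≠ c'.2

/-- A (standard) layer: comparators `(i,j)` with `i < j`, channels pairwise disjoint. -/
def IsLayer {n : ℕ} (L : Layer n) : Prop :=
  (∀ c ∈ L, c.1 < c.2) ∧ NoOverlap L

/-- A generalized layer: comparators `(i,j)` with `i ≠ j` allowed in any order. -/
def IsGenLayer {n : ℕ} (L : Layer n) : Prop :=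
  (∀ c ∈ L, c.1 ≠ c.2) ∧ NoOverlap L

def IsNet {n : ℕ} (C : Net n) : Prop := ∀ L ∈ C, IsLayer L

def IsGenNet {n : ℕ} (C : Net n) : Prop := ∀ L ∈ C, IsGenLayer L

/-- Apply one layer to a Boolean vector: a comparator `(i,j)` puts the min
(`&&`) on channel `i` and the max (`||`) on channel `j`. -/
noncomputable def applyLayer {n : ℕ} (L : Layer n) (x : Fin n → Bool) : Fin n → Bool :=
  fun k =>
    if h1 : ∃ c ∈ L, c.1 = k then x h1.choose.1 && x h1.choose.2
    else if h2 : ∃ c ∈ L, c.2 = k then x h2.choose.1 || x h2.choose.2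
    else x k

/-- Run a comparator network on a Boolean input (layers applied in sequence). -/
noncomputable def run {n : ℕ} (C : Net n) (x : Fin n → Bool) : Fin n → Bool :=
  C.foldl (fun y L => applyLayer L y) x

/-- Ascendingly sorted Boolean vector. -/
def BSorted {n : ℕ} (x : Fin n → Bool) : Prop :=
  ∀ i j : Fin n, i ≤ j → x i ≤ x j

/-- A sorting network: a comparator network sorting every Boolean input. -/
def IsSortingNet {n : ℕ} (C : Net n) : Prop :=
  IsNet C ∧ ∀ x : Fin n → Bool, BSorted (run C x)

/-- The set of outputs of a network on all Boolean inputs. -/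
def outputs {n : ℕ} (C : Net n) : Set (Fin n → Bool) := Set.range (run C)

/-- Apply one layer to a vector of naturals. -/
noncomputable def applyLayerN {n : ℕ} (L : Layer n) (x : Fin n → ℕ) : Fin n → ℕ :=
  fun k =>
    if h1 : ∃ c ∈ L, c.1 = k then min (x h1.choose.1) (x h1.choose.2)
    else if h2 : ∃ c ∈ L, c.2 = k then max (x h2.choose.1) (x h2.choose.2)
    else x k

noncomputable def runN {n : ℕ} (C : Net n) (x : Fin n → ℕ) : Fin n → ℕ :=
  C.foldl (fun y L => applyLayerN L y) x

def NSorted {n : ℕ} (x : Fin n → ℕ) : Prop :=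
  ∀ i j : Fin n, i ≤ j → x i ≤ x j

/-- Permute the coordinates of a Boolean vector by `π` (channel `k`'s value
moves to channel `π k`). -/
def permVec {n : ℕ} (π : Equiv.Perm (Fin n)) (x : Fin n → Bool) : Fin n → Bool :=
  fun i => x (π.symm i)

/-- The image of a set of Boolean vectors under coordinate permutation by `π`. -/
def permSet {n : ℕ} (π : Equiv.Perm (Fin n)) (X : Set (Fin n → Bool)) :
    Set (Fin n → Bool) :=
  permVec π '' X

/-- The image `π(L)` of a layer under a permutation of channels. -/
def permLayer {n : ℕ} (π : Equiv.Perm (Fin n)) (L : Layer n) : Layer n :=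
  L.image fun c => (π c.1, π c.2)

/-- Channel `i` is used by some comparator of the layer `L`. -/
def usedIn {n : ℕ} (L : Layer n) (i : Fin n) : Prop := ∃ c ∈ L, c.1 = i ∨ c.2 = i

/-- Channels `i` and `j` are joined by a comparator of `L`. -/
def Joined {n : ℕ} (L : Layer n) (i j : Fin n) : Prop := (i, j) ∈ L ∨ (j, i) ∈ L

/-- `i` is the smaller channel of some comparator of `L` (a min-channel). -/
def MinChan {n : ℕ} (L : Layer n) (i : Fin n) : Prop := ∃ c ∈ L, c.1 = i

/-- `i` is the larger channel of some comparator of `L` (a max-channel). -/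
def MaxChan {n : ℕ} (L : Layer n) (i : Fin n) : Prop := ∃ c ∈ L, c.2 = i

/-- A two-layer network `[L1, L2]` is redundant if some comparator can be removed
so that the outputs of the result are a permutation of the original outputs. -/
def Redundant {n : ℕ} (L1 L2 : Layer n) : Prop :=
  ∃ π : Equiv.Perm (Fin n),
    (∃ c ∈ L1, outputs [L1.erase c, L2] = permSet π (outputs [L1, L2])) ∨
    (∃ c ∈ L2, outputs [L1, L2.erase c] = permSet π (outputs [L1, L2]))

/-- A two-layer network `[L1, L2]` is saturated if it is non-redundant and no
comparator on two channels unused in the second layer can be added to the second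
layer so as to make the output set a proper subset of a permutation of the
original output set. -/
def Saturated {n : ℕ} (L1 L2 : Layer n) : Prop :=
  ¬ Redundant L1 L2 ∧
  ¬ ∃ (c : Comp n) (π : Equiv.Perm (Fin n)),
      c.1 < c.2 ∧ ¬ usedIn L2 c.1 ∧ ¬ usedIn L2 c.2 ∧
      outputs [L1, insert c L2] ⊂ permSet π (outputs [L1, L2])

/-- Vertices of the graph representation of `C`: the comparators of `C`,
tagged with the index of the layer containing them. -/
def Vertex {n : ℕ} (C : Net n) := {p : ℕ × Comp n // p.2 ∈ C.getD p.1 ∅}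

/-- The channel carrying the min output (`b = false`, label 1) or max output
(`b = true`, label 2) of a comparator. -/
def outChan {n : ℕ} (c : Comp n) (b : Bool) : Fin n := if b then c.2 else c.1

/-- An edge with label `b` (1 for min, 2 for max) from comparator `u` to
comparator `v`: the corresponding output of `u` is an input of `v`, i.e. `v`
is the next comparator on that channel. -/
def Edge {n : ℕ} (C : Net n) (b : Bool) (u v : ℕ × Comp n) : Prop :=
  u.1 < v.1 ∧ (outChan u.2 b = v.2.1 ∨ outChan u.2 b = v.2.2) ∧
  ∀ m, u.1 < m → m < v.1 → ¬ usedIn (C.getD m ∅) (outChan u.2 b)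

/-- The graph representations of `C` and `D` are isomorphic: a bijection of
comparators preserving the labeled edges. -/
def GraphIso {n m : ℕ} (C : Net n) (D : Net m) : Prop :=
  ∃ f : Vertex C ≃ Vertex D,
    ∀ (b : Bool) (u v : Vertex C),
      Edge C b u.val v.val ↔ Edge D b (f u).val (f v).val

/-- The graph representation of `C` is connected. -/
def GraphConnected {n : ℕ} (C : Net n) : Prop :=
  ∀ u v : Vertex C,
    Relation.ReflTransGen
      (fun a b : Vertex C => ∃ ℓ : Bool, Edge C ℓ a.val b.val ∨ Edge C ℓ b.val a.val) u v

/-- Reflection of a comparator: `(i,j) ↦ (n-j+1, n-i+1)` (in 1-based terms). -/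
def reflectComp {n : ℕ} (c : Comp n) : Comp n := (c.2.rev, c.1.rev)

def reflectLayer {n : ℕ} (L : Layer n) : Layer n := L.image reflectComp

/-- Reflection `C^R` of a comparator network. -/
def reflect {n : ℕ} (C : Net n) : Net n := C.map reflectLayer

/-- The first layer `F_n = {(2i-1, 2i) : 1 ≤ i ≤ ⌊n/2⌋}` (0-indexed: `(2i, 2i+1)`). -/
def FLayer (n : ℕ) : Layer n :=
  Finset.univ.filter fun c : Comp n => c.1.val % 2 = 0 ∧ c.2.val = c.1.val + 1

/-- The two-layer networks with first layer `F_n`, parametrized by second layer. -/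
def SecondLayers (n : ℕ) := {L : Layer n // IsLayer L}

/-- The number `|R(G_n)|` of equivalence classes of two-layer networks with
first layer `F_n`, under graph isomorphism `≈`. -/
noncomputable def numClasses (n : ℕ) : ℕ :=
  Nat.card (Quot fun L L' : SecondLayers n =>
    GraphIso ([FLayer n, L.val] : Net n) ([FLayer n, L'.val] : Net n))

/-- Redundant two-layer networks with first layer `F_n`. -/
def RedLayers (n : ℕ) := {L : Layer n // IsLayer L ∧ Redundant (FLayer n) L}

/-- The number of equivalence classes of redundant two-layer networks with
first layer `F_n`, under graph isomorphism `≈`. -/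
noncomputable def numRedClasses (n : ℕ) : ℕ :=
  Nat.card (Quot fun L L' : RedLayers n =>
    GraphIso ([FLayer n, L.val] : Net n) ([FLayer n, L'.val] : Net n))

/- ## chunk 1 -/

variable {n m : ℕ}

def Touch {n : ℕ} (a c : Comp n) (b : Bool) : Prop :=
  outChan a b = c.1 ∨ outChan a b = c.2

lemma vertex_cases {A B : Layer n} (v : Vertex ([A,B] : Net n)) :
    (v.val.1 = 0 ∧ v.val.2 ∈ A) ∨ (v.val.1 = 1 ∧ v.val.2 ∈ B) := by
  have h := v.property
  match hk : v.val.1, h with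
  | 0, h => exact Or.inl ⟨rfl, by simpa using h⟩
  | 1, h => exact Or.inr ⟨rfl, by simpa using h⟩
  | (k+2), h => simp [List.getD] at h

def v2 (A B : Layer n) : Vertex ([A,B] : Net n) ≃ ({c // c ∈ A} ⊕ {c // c ∈ B}) where
  toFun v := if h : v.val.1 = 0 then
      Sum.inl ⟨v.val.2, by rcases vertex_cases v with ⟨_,h2⟩|⟨h1,_⟩; exact h2; omega⟩
    else Sum.inr ⟨v.val.2, by rcases vertex_cases v with ⟨h1,_⟩|⟨_,h2⟩; omega; exact h2⟩
  invFun x := match x with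
    | .inl a => ⟨(0, a.val), by simp⟩
    | .inr c => ⟨(1, c.val), by simp⟩
  left_inv v := by
    rcases vertex_cases v with ⟨h1,h2⟩|⟨h1,h2⟩ <;> dsimp only
    · rw [dif_pos h1]; exact Subtype.ext (Prod.ext h1.symm rfl)
    · rw [dif_neg (by omega)]; exact Subtype.ext (Prod.ext h1.symm rfl)
  right_inv x := by cases x <;> simp

def ETouch {A B : Layer n}
    (x y : {c // c ∈ A} ⊕ {c // c ∈ B}) (b : Bool) : Prop :=
  match x, y with
  | .inl a, .inr c => Touch a.val c.val b
  | _, _ => False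

lemma edge_iff_etouch {A B : Layer n} (b : Bool) (x y : {c // c ∈ A} ⊕ {c // c ∈ B}) :
    Edge ([A,B] : Net n) b ((v2 A B).symm x).val ((v2 A B).symm y).val ↔ ETouch x y b := by
  cases x with
  | inl a => cases y with
    | inl a' => simp [Edge, ETouch, v2]
    | inr c =>
        show Edge ([A,B] : Net n) b (0, a.val) (1, c.val) ↔ Touch a.val c.val b
        constructor
        · rintro ⟨-, h, -⟩; exact h
        · intro h; exact ⟨Nat.zero_lt_one, h, fun k hk hk1 => by omega⟩
  | inr c => cases y <;> simp [Edge, ETouch, v2]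

lemma edge_iff_etouch' {A B : Layer n} (b : Bool) (u v : Vertex ([A,B] : Net n)) :
    Edge ([A,B] : Net n) b u.val v.val ↔ ETouch (v2 A B u) (v2 A B v) b := by
  have := edge_iff_etouch b (v2 A B u) (v2 A B v)
  simpa using this

structure TC (A B : Layer n) (A' : Layer m) (B' : Layer m) where
  eA : {c // c ∈ A} ≃ {c // c ∈ A'}
  eB : {c // c ∈ B} ≃ {c // c ∈ B'}
  compat : ∀ (a : {c // c ∈ A}) (c : {c // c ∈ B}) (b : Bool),
    Touch a.val c.val b ↔ Touch (eA a).val (eB c).val b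

lemma TC.graphIso {A B : Layer n} {A' B' : Layer m} (t : TC A B A' B') :
    GraphIso ([A,B] : Net n) ([A',B'] : Net m) := by
  refine ⟨(v2 A B).trans ((Equiv.sumCongr t.eA t.eB).trans (v2 A' B').symm), ?_⟩
  intro b u v
  rw [edge_iff_etouch' b u v]
  rw [show ((v2 A B).trans ((Equiv.sumCongr t.eA t.eB).trans (v2 A' B').symm)) u
      = (v2 A' B').symm (Equiv.sumCongr t.eA t.eB (v2 A B u)) from rfl]
  rw [show ((v2 A B).trans ((Equiv.sumCongr t.eA t.eB).trans (v2 A' B').symm)) v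
      = (v2 A' B').symm (Equiv.sumCongr t.eA t.eB (v2 A B v)) from rfl]
  rw [edge_iff_etouch]
  cases hu : v2 A B u <;> cases hv : v2 A B v <;> simp only [Equiv.sumCongr_apply, Sum.map_inl, Sum.map_inr, ETouch] <;> try rfl
  exact t.compat _ _ b

lemma GraphIso.refl' (C : Net n) : GraphIso C C := ⟨Equiv.refl _, fun _ _ _ => Iff.rfl⟩

lemma GraphIso.symm' {C : Net n} {D : Net m} (h : GraphIso C D) : GraphIso D C := by
  obtain ⟨f, hf⟩ := h
  refine ⟨f.symm, fun b u v => ?_⟩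
  have := hf b (f.symm u) (f.symm v)
  simpa using this.symm

lemma GraphIso.trans' {k : ℕ} {C : Net n} {D : Net m} {E : Net k}
    (h1 : GraphIso C D) (h2 : GraphIso D E) : GraphIso C E := by
  obtain ⟨f, hf⟩ := h1; obtain ⟨g, hg⟩ := h2
  exact ⟨f.trans g, fun b u v => (hf b u v).trans (hg b (f u) (f v))⟩

lemma etouch_not_inl_right {A B : Layer n} (x : {c // c ∈ A} ⊕ {c // c ∈ B})
    (a : {c // c ∈ A}) (b : Bool) : ¬ ETouch x (Sum.inl a) b := by
  cases x <;> simp [ETouch]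

lemma tc_of_graphIso {A B : Layer n} {A' B' : Layer m}
    (htA : ∀ c : {c // c ∈ B}, ∃ a, ∃ b : Bool, a ∈ A ∧ Touch a c.val b)
    (htB : ∀ c : {c // c ∈ B'}, ∃ a, ∃ b : Bool, a ∈ A' ∧ Touch a c.val b)
    (h : GraphIso ([A,B] : Net n) ([A',B'] : Net m)) : Nonempty (TC A B A' B') := by
  obtain ⟨f, hf⟩ := h
  set F : ({c // c ∈ A} ⊕ {c // c ∈ B}) ≃ ({c // c ∈ A'} ⊕ {c // c ∈ B'}) :=
    (v2 A B).symm.trans (f.trans (v2 A' B')) with hFdef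
  have hE : ∀ (b : Bool) x y, ETouch x y b ↔ ETouch (F x) (F y) b := by
    intro b x y
    have h1 := hf b ((v2 A B).symm x) ((v2 A B).symm y)
    rw [edge_iff_etouch] at h1
    have e1 : f ((v2 A B).symm x) = (v2 A' B').symm (F x) := by simp [hFdef]
    have e2 : f ((v2 A B).symm y) = (v2 A' B').symm (F y) := by simp [hFdef]
    rw [e1, e2, edge_iff_etouch] at h1
    exact h1
  have hE' : ∀ (b : Bool) x y, ETouch x y b ↔ ETouch (F.symm x) (F.symm y) b := by
    intro b x y
    have := hE b (F.symm x) (F.symm y)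
    simpa using this.symm
  have hAr : ∀ c : {c // c ∈ B}, ∃ c', F (.inr c) = .inr c' := by
    intro c
    obtain ⟨a, b, ha, ht⟩ := htA c
    have h0 : ETouch (F (Sum.inl ⟨a, ha⟩)) (F (Sum.inr c)) b := (hE b _ _).mp ht
    cases hFc : F (Sum.inr c) with
    | inl a' => rw [hFc] at h0; exact absurd h0 (etouch_not_inl_right _ _ _)
    | inr c' => exact ⟨c', rfl⟩
  have hBr : ∀ c' : {c // c ∈ B'}, ∃ c, F.symm (.inr c') = .inr c := by
    intro c'
    obtain ⟨a, b, ha, ht⟩ := htB c'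
    have h0 : ETouch (F.symm (Sum.inl ⟨a, ha⟩)) (F.symm (Sum.inr c')) b := (hE' b _ _).mp ht
    cases hFc : F.symm (Sum.inr c') with
    | inl a'' => rw [hFc] at h0; exact absurd h0 (etouch_not_inl_right _ _ _)
    | inr c => exact ⟨c, rfl⟩
  have hAl : ∀ a : {c // c ∈ A}, ∃ a', F (.inl a) = .inl a' := by
    intro a
    cases hFa : F (Sum.inl a) with
    | inl a' => exact ⟨a', rfl⟩
    | inr c' =>
        obtain ⟨c, hc⟩ := hBr c'
        have : F.symm (Sum.inr c') = Sum.inl a := by rw [← hFa]; simp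
        rw [hc] at this; simp at this
  classical
  set gB : {c // c ∈ B} → {c // c ∈ B'} := fun c => (hAr c).choose with hgBdef
  have hgB : ∀ c, F (Sum.inr c) = Sum.inr (gB c) := fun c => (hAr c).choose_spec
  set gA : {c // c ∈ A} → {c // c ∈ A'} := fun a => (hAl a).choose with hgAdef
  have hgA : ∀ a, F (Sum.inl a) = Sum.inl (gA a) := fun a => (hAl a).choose_spec
  have hBinj : Function.Bijective gB := by
    constructor
    · intro c1 c2 hcc
      have : F (Sum.inr c1) = F (Sum.inr c2) := by rw [hgB, hgB, hcc]
      simpa using F.injective this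
    · intro c'
      obtain ⟨c, hc⟩ := hBr c'
      refine ⟨c, ?_⟩
      have : F (Sum.inr c) = Sum.inr c' := by rw [← hc]; simp
      rw [hgB] at this; simpa using this
  have hAinj : Function.Bijective gA := by
    constructor
    · intro a1 a2 haa
      have : F (Sum.inl a1) = F (Sum.inl a2) := by rw [hgA, hgA, haa]
      simpa using F.injective this
    · intro a'
      rcases hFa : F.symm (Sum.inl a') with a | c
      · refine ⟨a, ?_⟩
        have : F (Sum.inl a) = Sum.inl a' := by rw [← hFa]; simp
        rw [hgA] at this; simpa using this
      · exfalso
        have : F (Sum.inr c) = Sum.inl a' := by rw [← hFa]; simp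
        rw [hgB] at this; simp at this
  refine ⟨⟨Equiv.ofBijective gA hAinj, Equiv.ofBijective gB hBinj, ?_⟩⟩
  intro a c b
  have h0 : Touch a.val c.val b ↔ ETouch (Sum.inl a) (Sum.inr c) (B := B) b := Iff.rfl
  rw [h0, hE b, hgA, hgB]
  rfl

/-- splitting off an element of a finset -/
def eraseEquiv {L : Layer n} {c0 : Comp n} (h : c0 ∈ L) :
    {c // c ∈ L} ≃ ({c // c ∈ L.erase c0} ⊕ Unit) where
  toFun c := if hc : c.val = c0 then Sum.inr () else
    Sum.inl ⟨c.val, Finset.mem_erase.2 ⟨hc, c.property⟩⟩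
  invFun x := match x with
    | .inl c => ⟨c.val, Finset.mem_of_mem_erase c.property⟩
    | .inr _ => ⟨c0, h⟩
  left_inv c := by
    dsimp only; by_cases hc : c.val = c0
    · rw [dif_pos hc]; exact Subtype.ext hc.symm
    · rw [dif_neg hc]
  right_inv x := by
    rcases x with c | u
    · dsimp only; rw [dif_neg (Finset.ne_of_mem_erase c.property)]
    · dsimp only; rw [dif_pos rfl]

lemma eraseEquiv_symm_inl {L : Layer n} {c0 : Comp n} (h : c0 ∈ L) (c : {c // c ∈ L.erase c0}) :
    ((eraseEquiv h).symm (Sum.inl c)).val = c.val := rfl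

lemma eraseEquiv_symm_inr {L : Layer n} {c0 : Comp n} (h : c0 ∈ L) :
    ((eraseEquiv h).symm (Sum.inr ())).val = c0 := rfl

lemma eraseEquiv_of_ne {L : Layer n} {c0 : Comp n} (h : c0 ∈ L) (c : {c // c ∈ L})
    (hc : c.val ≠ c0) : eraseEquiv h c = Sum.inl ⟨c.val, Finset.mem_erase.2 ⟨hc, c.property⟩⟩ := by
  simp [eraseEquiv, hc]

lemma eraseEquiv_of_eq {L : Layer n} {c0 : Comp n} (h : c0 ∈ L) (c : {c // c ∈ L})
    (hc : c.val = c0) : eraseEquiv h c = Sum.inr () := by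
  simp [eraseEquiv, hc]

/-- a comparator with a unique in-touch -/
def InOne {k : ℕ} (A : Layer k) (c : Comp k) : Prop :=
  ∃! p : Comp k × Bool, p.1 ∈ A ∧ Touch p.1 c p.2

def TC.symm {A B : Layer n} {A' B' : Layer m} (t : TC A B A' B') : TC A' B' A B where
  eA := t.eA.symm
  eB := t.eB.symm
  compat := by
    intro a c b
    have := t.compat (t.eA.symm a) (t.eB.symm c) b
    simpa using this.symm

lemma TC.inOne_iff_aux {A B : Layer n} {A' B' : Layer m} (t : TC A B A' B') (c : {c // c ∈ B})
    (h : InOne A c.val) : InOne A' (t.eB c).val := by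
  obtain ⟨⟨a, b⟩, ⟨ha, ht⟩, hu⟩ := h
  refine ⟨((t.eA ⟨a, ha⟩).val, b), ⟨(t.eA ⟨a, ha⟩).property, (t.compat ⟨a, ha⟩ c b).mp ht⟩, ?_⟩
  rintro ⟨a', b'⟩ ⟨ha', ht'⟩
  have ht'' : Touch (t.eA.symm ⟨a', ha'⟩).val c.val b' := by
    have := (t.compat (t.eA.symm ⟨a', ha'⟩) c b')
    simp only [Equiv.apply_symm_apply] at this
    exact this.mpr ht'
  have heq := hu ((t.eA.symm ⟨a', ha'⟩).val, b') ⟨(t.eA.symm ⟨a', ha'⟩).property, ht''⟩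
  have h1 : (t.eA.symm ⟨a', ha'⟩).val = a := congrArg Prod.fst heq
  have h2 : b' = b := congrArg Prod.snd heq
  have h3 : t.eA.symm ⟨a', ha'⟩ = ⟨a, ha⟩ := Subtype.ext h1
  have h4 : (⟨a', ha'⟩ : {c // c ∈ A'}) = t.eA ⟨a, ha⟩ := by
    rw [← h3]; simp
  exact Prod.ext (by rw [← h4]) h2

lemma TC.inOne_iff {A B : Layer n} {A' B' : Layer m} (t : TC A B A' B') (c : {c // c ∈ B}) :
    InOne A c.val ↔ InOne A' (t.eB c).val := by
  constructor
  · exact t.inOne_iff_aux c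
  · intro h
    have := t.symm.inOne_iff_aux (t.eB c) (by simpa [TC.symm] using h)
    simpa [TC.symm] using this

/-- the comparator uses the last (free) channel -/
def FreeT {k : ℕ} (c : Comp k) : Prop := c.1.val = k - 1 ∨ c.2.val = k - 1

/-- Surgery data: the big two-layer net `[A,B]` equals the small net `[As,Bs]`
plus one extra first-layer comparator `u0` and one extra second-layer comparator
`v0`, with `u0` feeding `v0` via label `b0` and feeding (via label `!b0`) the
second-layer comparator using the free channel of the small net (if any). -/
structure SD (ms : ℕ) (As Bs : Layer ms) {n : ℕ} (A B : Layer n)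
    (u0 v0 : Comp n) (b0 : Bool) : Type _ where
  hu0 : u0 ∈ A
  hv0 : v0 ∈ B
  eA : {c // c ∈ As} ≃ {c // c ∈ A.erase u0}
  eB : {c // c ∈ Bs} ≃ {c // c ∈ B.erase v0}
  compat : ∀ a c (b : Bool), Touch a.val c.val b ↔ Touch (eA a).val (eB c).val b
  hv0t : ∀ a ∈ A, ∀ b : Bool, Touch a v0 b ↔ (a = u0 ∧ b = b0)
  hu0t : ∀ (c : {c // c ∈ B.erase v0}) (b : Bool),
    Touch u0 c.val b ↔ (b = !b0 ∧ FreeT (eB.symm c).val)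
  htwo : ∀ (c : {c // c ∈ B.erase v0}), ∃ p q : Comp n × Bool, p ≠ q ∧
      (p.1 ∈ A ∧ Touch p.1 c.val p.2) ∧ (q.1 ∈ A ∧ Touch q.1 c.val q.2)
  hfree : ∀ (c : {c // c ∈ Bs}), FreeT c.val ↔ InOne As c.val

variable {ms ms' : ℕ} {As Bs : Layer ms} {As' Bs' : Layer ms'}
  {A B : Layer n} {A' B' : Layer m} {u0 v0 : Comp n} {u0' v0' : Comp m} {b0 b0' : Bool}

lemma SD.inOne_v0 (d : SD ms As Bs A B u0 v0 b0) : InOne A v0 := by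
  refine ⟨(u0, b0), ⟨d.hu0, (d.hv0t u0 d.hu0 b0).mpr ⟨rfl, rfl⟩⟩, ?_⟩
  rintro ⟨a, b⟩ ⟨ha, ht⟩
  obtain ⟨h1, h2⟩ := (d.hv0t a ha b).mp ht
  exact Prod.ext h1 h2

lemma SD.not_inOne (d : SD ms As Bs A B u0 v0 b0) (c : {c // c ∈ B}) (hc : c.val ≠ v0) :
    ¬ InOne A c.val := by
  rintro ⟨r, _, hu⟩
  obtain ⟨p, q, hpq, hp, hq⟩ := d.htwo ⟨c.val, Finset.mem_erase.2 ⟨hc, c.property⟩⟩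
  exact hpq ((hu p hp).trans (hu q hq).symm)

/-- surgery upward: a touch-compatible pair of equivalences of the small nets
extends to the big nets. -/
noncomputable def SD.up (d : SD ms As Bs A B u0 v0 b0) (d' : SD ms' As' Bs' A' B' u0' v0' b0)
    (t : TC As Bs As' Bs') : TC A B A' B' where
  eA := (eraseEquiv d.hu0).trans ((Equiv.sumCongr (d.eA.symm.trans (t.eA.trans d'.eA))
    (Equiv.refl Unit)).trans (eraseEquiv d'.hu0).symm)
  eB := (eraseEquiv d.hv0).trans ((Equiv.sumCongr (d.eB.symm.trans (t.eB.trans d'.eB))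
    (Equiv.refl Unit)).trans (eraseEquiv d'.hv0).symm)
  compat := by
    intro a c b
    simp only [Equiv.trans_apply]
    by_cases hau : a.val = u0 <;> by_cases hcv : c.val = v0
    · -- a = u0, c = v0
      rw [eraseEquiv_of_eq d.hu0 a hau, eraseEquiv_of_eq d.hv0 c hcv]
      simp only [Equiv.sumCongr_apply, Sum.map_inr]
      rw [eraseEquiv_symm_inr d'.hu0, eraseEquiv_symm_inr d'.hv0, hau, hcv,
        d.hv0t u0 d.hu0 b, d'.hv0t u0' d'.hu0 b]
      simp
    · -- a = u0, c ≠ v0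
      rw [eraseEquiv_of_eq d.hu0 a hau, eraseEquiv_of_ne d.hv0 c hcv]
      simp only [Equiv.sumCongr_apply, Sum.map_inr, Sum.map_inl, Equiv.trans_apply]
      rw [eraseEquiv_symm_inr d'.hu0, eraseEquiv_symm_inl d'.hv0, hau]
      have hl := d.hu0t ⟨c.val, Finset.mem_erase.2 ⟨hcv, c.property⟩⟩ b
      have hr := d'.hu0t (d'.eB (t.eB (d.eB.symm ⟨c.val, Finset.mem_erase.2 ⟨hcv, c.property⟩⟩))) b
      simp only [Equiv.symm_apply_apply] at hr
      have h3 : FreeT (d.eB.symm ⟨c.val, Finset.mem_erase.2 ⟨hcv, c.property⟩⟩).val ↔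
          FreeT (t.eB (d.eB.symm ⟨c.val, Finset.mem_erase.2 ⟨hcv, c.property⟩⟩)).val := by
        rw [d.hfree _, d'.hfree _, t.inOne_iff _]
      exact hl.trans ((and_congr_right fun _ => h3).trans hr.symm)
    · -- a ≠ u0, c = v0
      rw [eraseEquiv_of_ne d.hu0 a hau, eraseEquiv_of_eq d.hv0 c hcv]
      simp only [Equiv.sumCongr_apply, Sum.map_inr, Sum.map_inl, Equiv.trans_apply]
      rw [eraseEquiv_symm_inr d'.hv0, eraseEquiv_symm_inl d'.hu0, hcv]
      refine iff_of_false ?_ ?_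
      · intro ht; exact hau ((d.hv0t a.val a.property b).mp ht).1
      · intro ht
        have hmem := (d'.eA (t.eA (d.eA.symm ⟨a.val, Finset.mem_erase.2 ⟨hau, a.property⟩⟩))).property
        exact Finset.ne_of_mem_erase hmem
          ((d'.hv0t _ (Finset.mem_of_mem_erase hmem) b).mp ht).1
    · -- a ≠ u0, c ≠ v0
      rw [eraseEquiv_of_ne d.hu0 a hau, eraseEquiv_of_ne d.hv0 c hcv]
      simp only [Equiv.sumCongr_apply, Sum.map_inl, Equiv.trans_apply]
      rw [eraseEquiv_symm_inl d'.hu0, eraseEquiv_symm_inl d'.hv0]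
      have h1 := d.compat (d.eA.symm ⟨a.val, Finset.mem_erase.2 ⟨hau, a.property⟩⟩)
        (d.eB.symm ⟨c.val, Finset.mem_erase.2 ⟨hcv, c.property⟩⟩) b
      simp only [Equiv.apply_symm_apply] at h1
      exact h1.symm.trans ((t.compat _ _ b).trans (d'.compat _ _ b))

/-- restricting an equivalence of layers along matched removed elements -/
def subEquiv {B : Layer n} {B' : Layer m} (E : {c // c ∈ B} ≃ {c // c ∈ B'}) {v0 : Comp n}
    {v0' : Comp m} (hmem : v0 ∈ B) (hmem' : v0' ∈ B') (hv : E ⟨v0, hmem⟩ = ⟨v0', hmem'⟩) :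
    {c // c ∈ B.erase v0} ≃ {c // c ∈ B'.erase v0'} where
  toFun c := ⟨(E ⟨c.val, Finset.mem_of_mem_erase c.property⟩).val, by
    refine Finset.mem_erase.2 ⟨?_, (E _).property⟩
    intro hval
    have h2 : E ⟨c.val, Finset.mem_of_mem_erase c.property⟩ = E ⟨v0, hmem⟩ := by
      rw [hv]; exact Subtype.ext hval
    exact Finset.ne_of_mem_erase c.property (congrArg Subtype.val (E.injective h2))⟩
  invFun c := ⟨(E.symm ⟨c.val, Finset.mem_of_mem_erase c.property⟩).val, by
    refine Finset.mem_erase.2 ⟨?_, (E.symm _).property⟩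
    intro hval
    have hv' : E.symm ⟨v0', hmem'⟩ = ⟨v0, hmem⟩ := by rw [← hv]; simp
    have h2 : E.symm ⟨c.val, Finset.mem_of_mem_erase c.property⟩ = E.symm ⟨v0', hmem'⟩ := by
      rw [hv']; exact Subtype.ext hval
    exact Finset.ne_of_mem_erase c.property (congrArg Subtype.val (E.symm.injective h2))⟩
  left_inv c := by apply Subtype.ext; simp
  right_inv c := by apply Subtype.ext; simp

lemma subEquiv_val {B : Layer n} {B' : Layer m} (E : {c // c ∈ B} ≃ {c // c ∈ B'}) {v0 : Comp n}
    {v0' : Comp m} (hmem : v0 ∈ B) (hmem' : v0' ∈ B') (hv : E ⟨v0, hmem⟩ = ⟨v0', hmem'⟩)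
    (c : {c // c ∈ B.erase v0}) :
    ((subEquiv E hmem hmem' hv) c).val = (E ⟨c.val, Finset.mem_of_mem_erase c.property⟩).val := rfl

/-- surgery downward -/
lemma SD.down (d : SD ms As Bs A B u0 v0 b0) (d' : SD ms' As' Bs' A' B' u0' v0' b0')
    (t : TC A B A' B') : b0 = b0' ∧ Nonempty (TC As Bs As' Bs') := by
  have hBv0 : t.eB ⟨v0, d.hv0⟩ = ⟨v0', d'.hv0⟩ := by
    have h1 : (t.eB ⟨v0, d.hv0⟩).val = v0' := by
      by_contra hne
      exact d'.not_inOne (t.eB ⟨v0, d.hv0⟩) hne ((t.inOne_iff ⟨v0, d.hv0⟩).mp d.inOne_v0)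
    exact Subtype.ext h1
  have htouch0 : Touch u0 v0 b0 := (d.hv0t u0 d.hu0 b0).mpr ⟨rfl, rfl⟩
  have htouch1 : Touch (t.eA ⟨u0, d.hu0⟩).val v0' b0 := by
    have := (t.compat ⟨u0, d.hu0⟩ ⟨v0, d.hv0⟩ b0).mp htouch0
    rwa [hBv0] at this
  obtain ⟨hAu0v, hb0⟩ := (d'.hv0t _ (t.eA ⟨u0, d.hu0⟩).property b0).mp htouch1
  have hAu0 : t.eA ⟨u0, d.hu0⟩ = ⟨u0', d'.hu0⟩ := Subtype.ext hAu0v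
  refine ⟨hb0, ?_⟩
  refine ⟨⟨d.eA.trans ((subEquiv t.eA d.hu0 d'.hu0 hAu0).trans d'.eA.symm),
    d.eB.trans ((subEquiv t.eB d.hv0 d'.hv0 hBv0).trans d'.eB.symm), ?_⟩⟩
  intro a c b
  simp only [Equiv.trans_apply]
  rw [d.compat a c b]
  have h2 := d'.compat (d'.eA.symm ((subEquiv t.eA d.hu0 d'.hu0 hAu0) (d.eA a)))
    (d'.eB.symm ((subEquiv t.eB d.hv0 d'.hv0 hBv0) (d.eB c))) b
  simp only [Equiv.apply_symm_apply] at h2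
  rw [h2]
  exact t.compat ⟨(d.eA a).val, Finset.mem_of_mem_erase (d.eA a).property⟩
    ⟨(d.eB c).val, Finset.mem_of_mem_erase (d.eB c).property⟩ b

/- ## concrete generic lemmas -/

lemma touch_val {k : ℕ} (a c : Comp k) (b : Bool) :
    Touch a c b ↔ ((if b then a.2.val else a.1.val) = c.1.val ∨
      (if b then a.2.val else a.1.val) = c.2.val) := by
  cases b <;> simp [Touch, outChan, Fin.ext_iff]

lemma mem_FLayer {k : ℕ} (c : Comp k) :
    c ∈ FLayer k ↔ c.1.val % 2 = 0 ∧ c.2.val = c.1.val + 1 := by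
  simp [FLayer]

/-- the first-layer comparator containing a given channel -/
def pairOf {k : ℕ} (v : Fin k) (h : v.val - v.val % 2 + 1 < k) : Comp k :=
  (⟨v.val - v.val % 2, by omega⟩, ⟨v.val - v.val % 2 + 1, h⟩)

lemma pairOf_mem {k : ℕ} (v : Fin k) (h : v.val - v.val % 2 + 1 < k) :
    pairOf v h ∈ FLayer k := by
  rw [mem_FLayer]; constructor
  · show (v.val - v.val % 2) % 2 = 0; omega
  · rfl

lemma pairOf_touch {k : ℕ} (v : Fin k) (h : v.val - v.val % 2 + 1 < k) (c : Comp k)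
    (hc : c.1.val = v.val ∨ c.2.val = v.val) :
    Touch (pairOf v h) c (decide (v.val % 2 = 1)) := by
  rw [touch_val]
  have h1 : (if (decide (v.val % 2 = 1) : Bool) then ((pairOf v h).2).val
      else ((pairOf v h).1).val) = v.val := by
    by_cases hp : v.val % 2 = 1
    · have hd : (decide (v.val % 2 = 1)) = true := by simp [hp]
      rw [hd]; show v.val - v.val % 2 + 1 = v.val; omega
    · have hd : (decide (v.val % 2 = 1)) = false := by simp [hp]
      rw [hd]; show v.val - v.val % 2 = v.val; omega
  rw [h1]; omega

lemma htwo_gen {k : ℕ} (c : Comp k) (hne : c.1.val ≠ c.2.val)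
    (h1 : c.1.val - c.1.val % 2 + 1 < k) (h2 : c.2.val - c.2.val % 2 + 1 < k) :
    ∃ p q : Comp k × Bool, p ≠ q ∧
      (p.1 ∈ FLayer k ∧ Touch p.1 c p.2) ∧ (q.1 ∈ FLayer k ∧ Touch q.1 c q.2) := by
  refine ⟨(pairOf c.1 h1, decide (c.1.val % 2 = 1)), (pairOf c.2 h2, decide (c.2.val % 2 = 1)),
    ?_, ⟨pairOf_mem _ _, pairOf_touch _ _ _ (Or.inl rfl)⟩,
    ⟨pairOf_mem _ _, pairOf_touch _ _ _ (Or.inr rfl)⟩⟩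
  intro heq
  have hb : (decide (c.1.val % 2 = 1) : Bool) = decide (c.2.val % 2 = 1) := congrArg Prod.snd heq
  have hp : pairOf c.1 h1 = pairOf c.2 h2 := congrArg Prod.fst heq
  have hpv : c.1.val - c.1.val % 2 = c.2.val - c.2.val % 2 :=
    congrArg (fun x => (Prod.fst x).val) hp
  by_cases ho : c.1.val % 2 = 1 <;> by_cases ho2 : c.2.val % 2 = 1 <;>
    simp [ho, ho2] at hb ⊢ <;> omega

lemma not_inOne_gen {k : ℕ} (c : Comp k) (hne : c.1.val ≠ c.2.val)
    (h1 : c.1.val - c.1.val % 2 + 1 < k) (h2 : c.2.val - c.2.val % 2 + 1 < k) :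
    ¬ InOne (FLayer k) c := by
  rintro ⟨r, _, hu⟩
  obtain ⟨p, q, hpq, hp, hq⟩ := htwo_gen c hne h1 h2
  exact hpq ((hu p hp).trans (hu q hq).symm)

lemma fchan_le {k : ℕ} {a : Comp k} (ha : a ∈ FLayer k) (hk : k % 2 = 1) (b : Bool) :
    (if b then a.2.val else a.1.val) ≤ k - 2 ∧ (if b then a.2.val else a.1.val) % 2 = (if b then 1 else 0) := by
  rw [mem_FLayer] at ha
  have h2 := a.2.isLt
  cases b <;> simp <;> first | omega | (split_ifs <;> omega)

lemma inOne_gen {k : ℕ} (hk : k % 2 = 1) (hk3 : 3 ≤ k) (c : Comp k)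
    (hlt : c.1.val < c.2.val) (hfr : c.2.val = k - 1) : InOne (FLayer k) c := by
  have h1 : c.1.val - c.1.val % 2 + 1 < k := by have := c.1.isLt; omega
  refine ⟨(pairOf c.1 h1, decide (c.1.val % 2 = 1)),
    ⟨pairOf_mem _ _, pairOf_touch _ _ _ (Or.inl rfl)⟩, ?_⟩
  rintro ⟨a, b⟩ ⟨ha, ht⟩
  dsimp only at ha ht
  rw [touch_val] at ht
  rw [mem_FLayer] at ha
  have h2lt := a.2.isLt
  have h1lt := c.1.isLt
  refine Prod.ext ?_ ?_
  · show a = pairOf c.1 h1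
    have e1 : a.1.val = c.1.val - c.1.val % 2 := by
      cases b
      · simp at ht; omega
      · simp at ht; omega
    refine Prod.ext (Fin.ext e1) (Fin.ext ?_)
    show a.2.val = c.1.val - c.1.val % 2 + 1
    omega
  · show b = decide (c.1.val % 2 = 1)
    cases b
    · simp at ht
      have hc1 : c.1.val % 2 = 0 := by omega
      simp [hc1]
    · simp at ht
      have hc1 : c.1.val % 2 = 1 := by omega
      simp [hc1]

lemma freeT_iff_inOne {k : ℕ} (hk : k % 2 = 1) (hk3 : 3 ≤ k) (c : Comp k)
    (hlt : c.1.val < c.2.val) : FreeT c ↔ InOne (FLayer k) c := by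
  constructor
  · intro hf
    rcases hf with h | h
    · exfalso; have := c.2.isLt; omega
    · exact inOne_gen hk hk3 c hlt h
  · intro hio
    by_contra hnf
    simp only [FreeT, not_or] at hnf
    have h1 : c.1.val - c.1.val % 2 + 1 < k := by have := c.1.isLt; omega
    have h2 : c.2.val - c.2.val % 2 + 1 < k := by have := c.2.isLt; omega
    exact not_inOne_gen c (by omega) h1 h2 hio

lemma exists_touch {k : ℕ} (c : Comp k) (hlt : c.1.val < c.2.val) (hk : 2 ≤ k) :
    ∃ a, ∃ b : Bool, a ∈ FLayer k ∧ Touch a c b := by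
  have h1 : c.1.val - c.1.val % 2 + 1 < k := by have := c.2.isLt; omega
  exact ⟨pairOf c.1 h1, decide (c.1.val % 2 = 1), pairOf_mem _ _,
    pairOf_touch _ _ _ (Or.inl rfl)⟩

/- ## case U : free channel unused -/

def castComp {k l : ℕ} (h : k ≤ l) (c : Comp k) : Comp l := (Fin.castLE h c.1, Fin.castLE h c.2)

def castLayer {k l : ℕ} (h : k ≤ l) (M : Layer k) : Layer l := M.image (castComp h)

lemma castComp_injective {k l : ℕ} (h : k ≤ l) : Function.Injective (castComp h) := by
  intro c d hcd
  have h1 : c.1.val = d.1.val := congrArg (fun x => x.1.val) hcd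
  have h2 : c.2.val = d.2.val := congrArg (fun x => x.2.val) hcd
  exact Prod.ext (Fin.ext h1) (Fin.ext h2)

lemma isLayer_castLayer {k l : ℕ} (h : k ≤ l) {M : Layer k} (hM : IsLayer M) :
    IsLayer (castLayer h M) := by
  constructor
  · intro c hc
    obtain ⟨d, hd, rfl⟩ := Finset.mem_image.mp hc
    have := hM.1 d hd
    show Fin.castLE h d.1 < Fin.castLE h d.2
    rw [Fin.lt_def] at this ⊢
    exact this
  · intro c hc c' hc' hne
    obtain ⟨d, hd, rfl⟩ := Finset.mem_image.mp hc
    obtain ⟨d', hd', rfl⟩ := Finset.mem_image.mp hc'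
    have hdd : d ≠ d' := fun heq => hne (by rw [heq])
    obtain ⟨o1, o2, o3, o4⟩ := hM.2 d hd d' hd' hdd
    refine ⟨?_, ?_, ?_, ?_⟩ <;> intro heq <;>
      [exact o1 (Fin.castLE_injective h heq); exact o2 (Fin.castLE_injective h heq);
       exact o3 (Fin.castLE_injective h heq); exact o4 (Fin.castLE_injective h heq)]

noncomputable def castEquiv {k l : ℕ} (h : k ≤ l) (M : Layer k) :
    {c // c ∈ M} ≃ {c // c ∈ castLayer h M} :=
  Equiv.ofBijective (fun d => ⟨castComp h d.val, Finset.mem_image_of_mem _ d.property⟩)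
    ⟨fun d d' hdd => Subtype.ext (castComp_injective h (congrArg Subtype.val hdd)),
     fun c => by
      obtain ⟨d, hd, hdc⟩ := Finset.mem_image.mp c.property
      exact ⟨⟨d, hd⟩, Subtype.ext hdc⟩⟩

lemma castEquiv_val {k l : ℕ} (h : k ≤ l) (M : Layer k) (d : {c // c ∈ M}) :
    ((castEquiv h M) d).val = castComp h d.val := rfl

def eAU {n : ℕ} (hn : n % 2 = 1) (h3 : 3 ≤ n) :
    {c // c ∈ FLayer n} ≃ {c // c ∈ FLayer (n-1)} where
  toFun a := ⟨(⟨a.val.1.val, by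
      obtain ⟨he, hs⟩ := (mem_FLayer _).mp a.property
      have := a.val.2.isLt; omega⟩,
    ⟨a.val.2.val, by
      obtain ⟨he, hs⟩ := (mem_FLayer _).mp a.property
      have := a.val.2.isLt; omega⟩), by
      rw [mem_FLayer]
      obtain ⟨he, hs⟩ := (mem_FLayer _).mp a.property
      exact ⟨he, hs⟩⟩
  invFun c := ⟨(Fin.castLE (Nat.sub_le n 1) c.val.1, Fin.castLE (Nat.sub_le n 1) c.val.2), by
      rw [mem_FLayer]
      obtain ⟨he, hs⟩ := (mem_FLayer _).mp c.property
      exact ⟨he, hs⟩⟩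
  left_inv a := by
    apply Subtype.ext; apply Prod.ext <;> apply Fin.ext <;> rfl
  right_inv c := by
    apply Subtype.ext; apply Prod.ext <;> apply Fin.ext <;> rfl

/-- the touch-compatible equivalence witnessing that adding an unused free channel
does not change the graph -/
noncomputable def tcU {n : ℕ} (hn : n % 2 = 1) (h3 : 3 ≤ n) (M : Layer (n-1)) :
    TC (FLayer n) (castLayer (Nat.sub_le n 1) M) (FLayer (n-1)) M where
  eA := eAU hn h3
  eB := (castEquiv (Nat.sub_le n 1) M).symm
  compat := by
    intro a c b
    obtain ⟨d, rfl⟩ := (castEquiv (Nat.sub_le n 1) M).surjective c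
    rw [Equiv.symm_apply_apply, touch_val, touch_val, castEquiv_val]
    have e1 : ((eAU hn h3) a).val.1.val = a.val.1.val := rfl
    have e2 : ((eAU hn h3) a).val.2.val = a.val.2.val := rfl
    rw [e1, e2]
    exact Iff.rfl

lemma exists_down {n : ℕ} (h3 : 3 ≤ n) (L : Layer n) (hL : IsLayer L)
    (hfree : ∀ c ∈ L, c.2.val ≠ n-1) :
    ∃ M : Layer (n-1), IsLayer M ∧ castLayer (Nat.sub_le n 1) M = L := by
  classical
  refine ⟨L.attach.image (fun c => (⟨c.val.1.val, by
      have h1 := hL.1 c.val c.property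
      have h2 := hfree c.val c.property
      have h3 := c.val.2.isLt
      rw [Fin.lt_def] at h1; omega⟩,
    (⟨c.val.2.val, by
      have h2 := hfree c.val c.property
      have h3 := c.val.2.isLt
      omega⟩ : Fin (n-1)))), ?_, ?_⟩
  · constructor
    · intro c hc
      obtain ⟨d, hd, rfl⟩ := Finset.mem_image.mp hc
      have := hL.1 d.val d.property
      rw [Fin.lt_def] at this ⊢
      exact this
    · intro c hc c' hc' hne
      obtain ⟨d, hd, rfl⟩ := Finset.mem_image.mp hc
      obtain ⟨d', hd', rfl⟩ := Finset.mem_image.mp hc'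
      have hdd : d.val ≠ d'.val := by
        intro heq
        apply hne
        apply Prod.ext <;> apply Fin.ext <;> simp [heq]
      obtain ⟨o1, o2, o3, o4⟩ := hL.2 d.val d.property d'.val d'.property hdd
      rw [Fin.ne_iff_vne] at o1 o2 o3 o4
      refine ⟨?_, ?_, ?_, ?_⟩ <;> rw [Fin.ne_iff_vne] <;> simpa using ‹_›
  · apply Finset.ext
    intro c
    simp only [castLayer, Finset.mem_image, Finset.mem_attach, true_and, Subtype.exists]
    constructor
    · rintro ⟨d, ⟨e, he, rfl⟩, rfl⟩
      convert he using 1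
      apply Prod.ext <;> apply Fin.ext <;> rfl
    · intro hc
      refine ⟨_, ⟨c, hc, rfl⟩, ?_⟩
      apply Prod.ext <;> apply Fin.ext <;> rfl

/- ## the Psi construction -/

lemma comp_eq_iff {k : ℕ} (c d : Comp k) : c = d ↔ c.1.val = d.1.val ∧ c.2.val = d.2.val := by
  rw [Prod.ext_iff, Fin.ext_iff, Fin.ext_iff]

section Psi

variable {n : ℕ}

def iotaF (h5 : 5 ≤ n) (b0 : Bool) (v : Fin (n-2)) : Fin n :=
  ⟨if v.val = n-3 ∧ b0 = false then n-2 else v.val, by have := v.isLt; split <;> omega⟩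

lemma iotaF_val (h5 : 5 ≤ n) (b0 : Bool) (v : Fin (n-2)) :
    (iotaF h5 b0 v).val = if v.val = n-3 ∧ b0 = false then n-2 else v.val := rfl

lemma iotaF_injective (h5 : 5 ≤ n) (b0 : Bool) : Function.Injective (iotaF h5 b0) := by
  intro x y h
  have hval := congrArg Fin.val h
  rw [iotaF_val, iotaF_val] at hval
  have hx := x.isLt; have hy := y.isLt
  apply Fin.ext
  split_ifs at hval <;> omega

def iotaComp (h5 : 5 ≤ n) (b0 : Bool) (c : Comp (n-2)) : Comp n :=
  (iotaF h5 b0 c.1, iotaF h5 b0 c.2)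

lemma iotaComp_injective (h5 : 5 ≤ n) (b0 : Bool) : Function.Injective (iotaComp h5 b0) := by
  intro x y h
  exact Prod.ext (iotaF_injective h5 b0 (congrArg Prod.fst h))
    (iotaF_injective h5 b0 (congrArg Prod.snd h))

def aCh (h5 : 5 ≤ n) (b0 : Bool) : Fin n := ⟨if b0 then n-2 else n-3, by split <;> omega⟩

def lastCh (h5 : 5 ≤ n) : Fin n := ⟨n-1, by omega⟩

def u0C (h5 : 5 ≤ n) : Comp n := (⟨n-3, by omega⟩, ⟨n-2, by omega⟩)

def v0C (h5 : 5 ≤ n) (b0 : Bool) : Comp n := (aCh h5 b0, lastCh h5)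

def PsiL (h5 : 5 ≤ n) (b0 : Bool) (M : Layer (n-2)) : Layer n :=
  M.image (iotaComp h5 b0) ∪ {v0C h5 b0}

lemma mem_PsiL (h5 : 5 ≤ n) (b0 : Bool) (M : Layer (n-2)) (c : Comp n) :
    c ∈ PsiL h5 b0 M ↔ (∃ d ∈ M, iotaComp h5 b0 d = c) ∨ c = v0C h5 b0 := by
  simp [PsiL, Finset.mem_union, Finset.mem_image, Finset.mem_singleton]
  exact Or.comm

lemma iotaF_ne_aCh (h5 : 5 ≤ n) (b0 : Bool) (v : Fin (n-2)) : iotaF h5 b0 v ≠ aCh h5 b0 := by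
  rw [Fin.ne_iff_vne, iotaF_val]
  show _ ≠ (if b0 then n-2 else n-3)
  have := v.isLt
  cases b0 <;> split_ifs <;> simp_all <;> omega

lemma iotaF_ne_last (h5 : 5 ≤ n) (b0 : Bool) (v : Fin (n-2)) : iotaF h5 b0 v ≠ lastCh h5 := by
  rw [Fin.ne_iff_vne, iotaF_val]
  show _ ≠ n-1
  have := v.isLt
  split_ifs <;> omega

lemma isLayer_PsiL (hn : n % 2 = 1) (h5 : 5 ≤ n) (b0 : Bool) {M : Layer (n-2)}
    (hM : IsLayer M) : IsLayer (PsiL h5 b0 M) := by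
  constructor
  · intro c hc
    rw [mem_PsiL] at hc
    rcases hc with ⟨d, hd, rfl⟩ | rfl
    · have := hM.1 d hd
      rw [Fin.lt_def] at this ⊢
      show (iotaF h5 b0 d.1).val < (iotaF h5 b0 d.2).val
      rw [iotaF_val, iotaF_val]
      have h1 := d.1.isLt; have h2 := d.2.isLt
      split_ifs <;> omega
    · show aCh h5 b0 < lastCh h5
      rw [Fin.lt_def]
      show (if b0 then n-2 else n-3) < n-1
      split_ifs <;> omega
  · intro c hc c' hc' hne
    rw [mem_PsiL] at hc hc'
    rcases hc with ⟨d, hd, rfl⟩ | rfl <;> rcases hc' with ⟨d', hd', rfl⟩ | rfl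
    · have hdd : d ≠ d' := fun heq => hne (by rw [heq])
      obtain ⟨o1, o2, o3, o4⟩ := hM.2 d hd d' hd' hdd
      exact ⟨fun h => o1 (iotaF_injective h5 b0 h), fun h => o2 (iotaF_injective h5 b0 h),
        fun h => o3 (iotaF_injective h5 b0 h), fun h => o4 (iotaF_injective h5 b0 h)⟩
    · exact ⟨iotaF_ne_aCh h5 b0 _, iotaF_ne_last h5 b0 _,
        iotaF_ne_aCh h5 b0 _, iotaF_ne_last h5 b0 _⟩
    · exact ⟨(iotaF_ne_aCh h5 b0 _).symm, (iotaF_ne_aCh h5 b0 _).symm,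
        (iotaF_ne_last h5 b0 _).symm, (iotaF_ne_last h5 b0 _).symm⟩
    · exact absurd rfl hne

def eAPsi (hn : n % 2 = 1) (h5 : 5 ≤ n) :
    {c // c ∈ FLayer (n-2)} ≃ {c // c ∈ (FLayer n).erase (u0C h5)} where
  toFun a := ⟨castComp (by omega : n-2 ≤ n) a.val, by
    obtain ⟨he, hs⟩ := (mem_FLayer _).mp a.property
    have h2 := a.val.2.isLt
    refine Finset.mem_erase.2 ⟨?_, by rw [mem_FLayer]; exact ⟨he, hs⟩⟩
    intro heq
    have h3 := ((comp_eq_iff _ _).mp heq).1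
    have h4 : (u0C h5).1.val = n-3 := rfl
    have h6 : (castComp (by omega : n-2 ≤ n) a.val).1.val = a.val.1.val := rfl
    rw [h4, h6] at h3
    omega⟩
  invFun c := ⟨(⟨c.val.1.val, by
      obtain ⟨hne, hmem⟩ := Finset.mem_erase.mp c.property
      obtain ⟨he, hs⟩ := (mem_FLayer _).mp hmem
      have h2 := c.val.2.isLt
      have hb : c.val.1.val ≠ n-3 := by
        intro h
        exact hne ((comp_eq_iff _ _).mpr ⟨h, by show _ = n-2; omega⟩)
      omega⟩,
    ⟨c.val.2.val, by
      obtain ⟨hne, hmem⟩ := Finset.mem_erase.mp c.property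
      obtain ⟨he, hs⟩ := (mem_FLayer _).mp hmem
      have h2 := c.val.2.isLt
      have hb : c.val.1.val ≠ n-3 := by
        intro h
        exact hne ((comp_eq_iff _ _).mpr ⟨h, by show _ = n-2; omega⟩)
      omega⟩), by
    obtain ⟨hne, hmem⟩ := Finset.mem_erase.mp c.property
    obtain ⟨he, hs⟩ := (mem_FLayer _).mp hmem
    rw [mem_FLayer]
    exact ⟨he, hs⟩⟩
  left_inv a := by
    apply Subtype.ext; apply Prod.ext <;> apply Fin.ext <;> rfl
  right_inv c := by
    apply Subtype.ext; apply Prod.ext <;> apply Fin.ext <;> rfl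

lemma eAPsi_val1 (hn : n % 2 = 1) (h5 : 5 ≤ n) (a : {c // c ∈ FLayer (n-2)}) :
    ((eAPsi hn h5) a).val.1.val = a.val.1.val := rfl

lemma eAPsi_val2 (hn : n % 2 = 1) (h5 : 5 ≤ n) (a : {c // c ∈ FLayer (n-2)}) :
    ((eAPsi hn h5) a).val.2.val = a.val.2.val := rfl

noncomputable def eBPsi (h5 : 5 ≤ n) (b0 : Bool) (M : Layer (n-2)) :
    {c // c ∈ M} ≃ {c // c ∈ (PsiL h5 b0 M).erase (v0C h5 b0)} :=
  Equiv.ofBijective (fun d => ⟨iotaComp h5 b0 d.val, by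
    refine Finset.mem_erase.2 ⟨?_, by rw [mem_PsiL]; exact Or.inl ⟨d.val, d.property, rfl⟩⟩
    intro heq
    exact iotaF_ne_last h5 b0 d.val.2 (congrArg Prod.snd heq)⟩)
  ⟨fun d d' hdd => Subtype.ext (iotaComp_injective h5 b0 (congrArg Subtype.val hdd)),
   fun c => by
    obtain ⟨hne, hmem⟩ := Finset.mem_erase.mp c.property
    rcases (mem_PsiL h5 b0 M c.val).mp hmem with ⟨d, hd, heq⟩ | heq
    · exact ⟨⟨d, hd⟩, Subtype.ext heq⟩
    · exact absurd heq hne⟩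

lemma eBPsi_val (h5 : 5 ≤ n) (b0 : Bool) (M : Layer (n-2)) (d : {c // c ∈ M}) :
    ((eBPsi h5 b0 M) d).val = iotaComp h5 b0 d.val := rfl

noncomputable def sdPsi (hn : n % 2 = 1) (h5 : 5 ≤ n) (b0 : Bool) (M : Layer (n-2))
    (hM : IsLayer M) :
    SD (n-2) (FLayer (n-2)) M (FLayer n) (PsiL h5 b0 M) (u0C h5) (v0C h5 b0) b0 where
  hu0 := by
    rw [mem_FLayer]
    exact ⟨by show (n-3) % 2 = 0; omega, by show n-2 = (n-3)+1; omega⟩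
  hv0 := by rw [mem_PsiL]; exact Or.inr rfl
  eA := eAPsi hn h5
  eB := eBPsi h5 b0 M
  compat := by
    intro a c b
    rw [touch_val, touch_val]
    obtain ⟨he, hs⟩ := (mem_FLayer _).mp a.property
    have h2 := a.val.2.isLt
    have hc1 := c.val.1.isLt
    have hc2 := c.val.2.isLt
    rw [eAPsi_val1, eAPsi_val2]
    have f1 : ((eBPsi h5 b0 M) c).val.1.val
        = if c.val.1.val = n-3 ∧ b0 = false then n-2 else c.val.1.val := rfl
    have f2 : ((eBPsi h5 b0 M) c).val.2.val
        = if c.val.2.val = n-3 ∧ b0 = false then n-2 else c.val.2.val := rfl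
    rw [f1, f2]
    cases b <;> cases b0 <;> simp <;> first | omega | (split_ifs <;> omega)
  hv0t := by
    intro a ha b
    rw [touch_val]
    obtain ⟨he, hs⟩ := (mem_FLayer _).mp ha
    have h2 := a.2.isLt
    have hv1 : (v0C h5 b0).1.val = if b0 then n-2 else n-3 := rfl
    have hv2 : (v0C h5 b0).2.val = n-1 := rfl
    rw [hv1, hv2, comp_eq_iff]
    have hu1 : (u0C h5).1.val = n-3 := rfl
    have hu2 : (u0C h5).2.val = n-2 := rfl
    rw [hu1, hu2]
    cases b <;> cases b0 <;> simp <;> omega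
  hu0t := by
    intro c b
    obtain ⟨d, rfl⟩ := (eBPsi h5 b0 M).surjective c
    rw [Equiv.symm_apply_apply, touch_val]
    have hu1 : (u0C h5).1.val = n-3 := rfl
    have hu2 : (u0C h5).2.val = n-2 := rfl
    have f1 : ((eBPsi h5 b0 M) d).val.1.val
        = if d.val.1.val = n-3 ∧ b0 = false then n-2 else d.val.1.val := rfl
    have f2 : ((eBPsi h5 b0 M) d).val.2.val
        = if d.val.2.val = n-3 ∧ b0 = false then n-2 else d.val.2.val := rfl
    rw [f1, f2]
    have hd1 := d.val.1.isLt
    have hd2 := d.val.2.isLt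
    show _ ↔ b = !b0 ∧ (d.val.1.val = n-2-1 ∨ d.val.2.val = n-2-1)
    cases b <;> cases b0 <;> simp [hu1, hu2] <;> first | omega | (split_ifs <;> omega)
  htwo := by
    intro c
    obtain ⟨d, rfl⟩ := (eBPsi h5 b0 M).surjective c
    have hlt := hM.1 d.val d.property
    rw [Fin.lt_def] at hlt
    have hd1 := d.val.1.isLt
    have hd2 := d.val.2.isLt
    have f1 : ((eBPsi h5 b0 M) d).val.1.val
        = if d.val.1.val = n-3 ∧ b0 = false then n-2 else d.val.1.val := rfl
    have f2 : ((eBPsi h5 b0 M) d).val.2.val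
        = if d.val.2.val = n-3 ∧ b0 = false then n-2 else d.val.2.val := rfl
    refine htwo_gen _ ?_ ?_ ?_ <;>
      [rw [f1, f2]; rw [f1]; rw [f2]] <;> cases b0 <;> simp <;>
      first | omega | (split_ifs <;> omega)
  hfree := by
    intro c
    refine freeT_iff_inOne (by omega) (by omega) c.val ?_
    have := hM.1 c.val c.property
    rwa [Fin.lt_def] at this

end Psi

/- ## the Phi reduction -/

section Phi

variable {n : ℕ}

/-- base of the pair of channel `av` -/
def pB (av : ℕ) : ℕ := av - av % 2

/-- the partner channel of `av` -/
def aPr (av : ℕ) : ℕ := if av % 2 = 0 then av + 1 else av - 1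

/-- relabeling of channels after removing channel `av` and the last channel;
the partner of `av` goes to the new free channel `n-3`. -/
def rhoV (n av x : ℕ) : ℕ := if x = aPr av then n - 3 else if x < pB av then x else x - 2

lemma rhoV_le (h5 : 5 ≤ n) {av x : ℕ} (hx : x ≤ n-2) (hav : av ≤ n-2) :
    rhoV n av x ≤ n - 3 := by
  unfold rhoV pB aPr
  split_ifs <;> omega

lemma rhoV_inj (h5 : 5 ≤ n) {av x y : ℕ} (hx : x ≤ n-2) (hy : y ≤ n-2)
    (hxa : x ≠ av) (hya : y ≠ av) (hav : av ≤ n-2)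
    (heq : rhoV n av x = rhoV n av y) : x = y := by
  unfold rhoV pB aPr at heq
  split_ifs at heq <;> omega

def rhoF (h5 : 5 ≤ n) (av : ℕ) (v : Fin n) : Fin (n-2) :=
  ⟨min (rhoV n av v.val) (n-3), by omega⟩

lemma rhoF_val (h5 : 5 ≤ n) {av : ℕ} (v : Fin n) (hx : v.val ≤ n-2) (hav : av ≤ n-2) :
    (rhoF h5 av v).val = rhoV n av v.val := by
  have := rhoV_le h5 hx hav
  simp only [rhoF]
  omega

def sortC {k : ℕ} (c : Comp k) : Comp k := if c.1.val ≤ c.2.val then c else (c.2, c.1)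

lemma sortC_cases {k : ℕ} (c : Comp k) : sortC c = c ∨ sortC c = (c.2, c.1) := by
  unfold sortC; split_ifs
  · exact Or.inl rfl
  · exact Or.inr rfl

lemma sortC_or {k : ℕ} (c : Comp k) (P : ℕ → Prop) :
    (P (sortC c).1.val ∨ P (sortC c).2.val) ↔ (P c.1.val ∨ P c.2.val) := by
  rcases sortC_cases c with h | h <;> rw [h]
  exact or_comm

/-- the reduced comparator -/
def rhoC (h5 : 5 ≤ n) (av : ℕ) (c : Comp n) : Comp (n-2) :=
  sortC (rhoF h5 av c.1, rhoF h5 av c.2)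

def PhiM (h5 : 5 ≤ n) (av : ℕ) (L : Layer n) (c0 : Comp n) : Layer (n-2) :=
  (L.erase c0).image (rhoC h5 av)

lemma mem_PhiM (h5 : 5 ≤ n) (av : ℕ) (L : Layer n) (c0 : Comp n) (c : Comp (n-2)) :
    c ∈ PhiM h5 av L c0 ↔ ∃ d ∈ L.erase c0, rhoC h5 av d = c := by
  simp [PhiM, Finset.mem_image]

/-- facts about the channels of remaining comparators -/
lemma chans_facts {L : Layer n} (hL : IsLayer L) {c0 : Comp n} (hc0 : c0 ∈ L)
    (hlast : c0.2.val = n - 1) (h5 : 5 ≤ n) {c : Comp n} (hc : c ∈ L.erase c0) :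
    c.1.val ≠ c0.1.val ∧ c.2.val ≠ c0.1.val ∧ c.1.val ≤ n-2 ∧ c.2.val ≤ n-2 ∧
      c.1.val < c.2.val := by
  obtain ⟨hne, hmem⟩ := Finset.mem_erase.mp hc
  obtain ⟨o1, o2, o3, o4⟩ := hL.2 c hmem c0 hc0 hne
  have hlt := hL.1 c hmem
  rw [Fin.lt_def] at hlt
  have h1 := c.1.isLt
  have h2 := c.2.isLt
  rw [Fin.ne_iff_vne] at o1 o2 o3 o4
  rw [hlast] at o2 o4
  exact ⟨o1, o3, by omega, by omega, hlt⟩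

lemma c0_facts {L : Layer n} (hL : IsLayer L) {c0 : Comp n} (hc0 : c0 ∈ L)
    (hlast : c0.2.val = n - 1) : c0.1.val ≤ n - 2 := by
  have hlt := hL.1 c0 hc0
  rw [Fin.lt_def] at hlt
  omega

lemma rhoC_lt (h5 : 5 ≤ n) {av : ℕ} (hav : av ≤ n-2) {c : Comp n}
    (h1 : c.1.val ≤ n-2) (h2 : c.2.val ≤ n-2) (h3 : c.1.val ≠ av) (h4 : c.2.val ≠ av)
    (h5' : c.1.val ≠ c.2.val) :
    (rhoC h5 av c).1.val < (rhoC h5 av c).2.val := by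
  have hne : (rhoF h5 av c.1).val ≠ (rhoF h5 av c.2).val := by
    rw [rhoF_val h5 _ h1 hav, rhoF_val h5 _ h2 hav]
    intro heq
    exact h5' (rhoV_inj h5 h1 h2 h3 h4 hav heq)
  unfold rhoC sortC
  split_ifs with h <;> dsimp only at h
  · show (rhoF h5 av c.1).val < (rhoF h5 av c.2).val
    omega
  · show (rhoF h5 av c.2).val < (rhoF h5 av c.1).val
    omega

lemma isLayer_PhiM {L : Layer n} (hL : IsLayer L) {c0 : Comp n} (hc0 : c0 ∈ L)
    (hlast : c0.2.val = n - 1) (h5 : 5 ≤ n) :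
    IsLayer (PhiM h5 c0.1.val L c0) := by
  have hav := c0_facts hL hc0 hlast
  constructor
  · intro c hc
    obtain ⟨d, hd, rfl⟩ := (mem_PhiM _ _ _ _ _).mp hc
    obtain ⟨f1, f2, f3, f4, f5⟩ := chans_facts hL hc0 hlast h5 hd
    rw [Fin.lt_def]
    exact rhoC_lt h5 hav f3 f4 f1 f2 (by omega)
  · intro c hc c' hc' hne
    obtain ⟨d, hd, rfl⟩ := (mem_PhiM _ _ _ _ _).mp hc
    obtain ⟨d', hd', rfl⟩ := (mem_PhiM _ _ _ _ _).mp hc'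
    obtain ⟨f1, f2, f3, f4, f5⟩ := chans_facts hL hc0 hlast h5 hd
    obtain ⟨g1, g2, g3, g4, g5⟩ := chans_facts hL hc0 hlast h5 hd'
    have hdd : d ≠ d' := fun heq => hne (by rw [heq])
    obtain ⟨o1, o2, o3, o4⟩ := hL.2 d (Finset.mem_of_mem_erase hd) d'
      (Finset.mem_of_mem_erase hd') hdd
    rw [Fin.ne_iff_vne] at o1 o2 o3 o4
    -- channel sets are disjoint
    have key : ∀ x ∈ [d.1, d.2], ∀ y ∈ [d'.1, d'.2],
        (rhoF h5 c0.1.val x).val ≠ (rhoF h5 c0.1.val y).val := by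
      intro x hx y hy
      fin_cases hx <;> fin_cases hy <;>
        · rw [rhoF_val h5 _ (by omega) hav, rhoF_val h5 _ (by omega) hav]
          intro heq
          have := rhoV_inj h5 (by omega) (by omega) (by omega) (by omega) hav heq
          omega
    have mem1 : ∀ (e : Comp n), (rhoC h5 c0.1.val e).1 = rhoF h5 c0.1.val e.1 ∨
        (rhoC h5 c0.1.val e).1 = rhoF h5 c0.1.val e.2 := by
      intro e
      unfold rhoC
      rcases sortC_cases (rhoF h5 c0.1.val e.1, rhoF h5 c0.1.val e.2) with h | h <;>
        rw [h]
      · exact Or.inl rfl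
      · exact Or.inr rfl
    have mem2 : ∀ (e : Comp n), (rhoC h5 c0.1.val e).2 = rhoF h5 c0.1.val e.1 ∨
        (rhoC h5 c0.1.val e).2 = rhoF h5 c0.1.val e.2 := by
      intro e
      unfold rhoC
      rcases sortC_cases (rhoF h5 c0.1.val e.1, rhoF h5 c0.1.val e.2) with h | h <;>
        rw [h]
      · exact Or.inr rfl
      · exact Or.inl rfl
    refine ⟨?_, ?_, ?_, ?_⟩ <;> rw [Fin.ne_iff_vne] <;>
      [rcases mem1 d with h | h <;> rcases mem1 d' with h' | h';
       rcases mem1 d with h | h <;> rcases mem2 d' with h' | h';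
       rcases mem2 d with h | h <;> rcases mem1 d' with h' | h';
       rcases mem2 d with h | h <;> rcases mem2 d' with h' | h'] <;>
      rw [h, h'] <;>
      first
        | exact key d.1 (by simp) d'.1 (by simp)
        | exact key d.1 (by simp) d'.2 (by simp)
        | exact key d.2 (by simp) d'.1 (by simp)
        | exact key d.2 (by simp) d'.2 (by simp)

def u0Phi (h5 : 5 ≤ n) (av : ℕ) (hav : av ≤ n-2) : Comp n :=
  (⟨pB av, by unfold pB; omega⟩, ⟨pB av + 1, by unfold pB; omega⟩)

lemma u0Phi_val1 (h5 : 5 ≤ n) (av : ℕ) (hav : av ≤ n-2) : (u0Phi h5 av hav).1.val = pB av := rfl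
lemma u0Phi_val2 (h5 : 5 ≤ n) (av : ℕ) (hav : av ≤ n-2) :
    (u0Phi h5 av hav).2.val = pB av + 1 := rfl

lemma pB_even (av : ℕ) : pB av % 2 = 0 := by unfold pB; omega

def upBase (p q : ℕ) : ℕ := if q < p then q else q + 2
def dnBase (p q : ℕ) : ℕ := if q < p then q else q - 2

lemma dn_up (p q : ℕ) : dnBase p (upBase p q) = q := by
  unfold upBase dnBase; split_ifs <;> omega

lemma up_dn (p q : ℕ) (hq : q ≠ p) (h1 : q % 2 = 0) (h2 : p % 2 = 0) :
    upBase p (dnBase p q) = q := by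
  unfold upBase dnBase; split_ifs <;> omega

def eAPhiTo (hn : n % 2 = 1) (h5 : 5 ≤ n) (av : ℕ) (hav : av ≤ n-2)
    (a : {c // c ∈ FLayer (n-2)}) : {c // c ∈ (FLayer n).erase (u0Phi h5 av hav)} :=
  ⟨(⟨upBase (pB av) a.val.1.val, by
      obtain ⟨he, hs⟩ := (mem_FLayer _).mp a.property
      have h2 := a.val.2.isLt
      unfold upBase pB at *; split_ifs <;> omega⟩,
    ⟨upBase (pB av) a.val.1.val + 1, by
      obtain ⟨he, hs⟩ := (mem_FLayer _).mp a.property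
      have h2 := a.val.2.isLt
      unfold upBase pB at *; split_ifs <;> omega⟩), by
    obtain ⟨he, hs⟩ := (mem_FLayer _).mp a.property
    have h2 := a.val.2.isLt
    refine Finset.mem_erase.2 ⟨?_, ?_⟩
    · intro heq
      have h3 := ((comp_eq_iff _ _).mp heq).1
      rw [u0Phi_val1] at h3
      revert h3
      show ¬ (upBase (pB av) a.val.1.val = pB av)
      unfold upBase pB at *; split_ifs <;> omega
    · rw [mem_FLayer]
      refine ⟨?_, rfl⟩
      show upBase (pB av) a.val.1.val % 2 = 0
      unfold upBase pB at *; split_ifs <;> omega⟩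

lemma eAPhiTo_val1 (hn : n % 2 = 1) (h5 : 5 ≤ n) (av : ℕ) (hav : av ≤ n-2)
    (a : {c // c ∈ FLayer (n-2)}) :
    (eAPhiTo hn h5 av hav a).val.1.val = upBase (pB av) a.val.1.val := rfl

lemma eAPhiTo_val2 (hn : n % 2 = 1) (h5 : 5 ≤ n) (av : ℕ) (hav : av ≤ n-2)
    (a : {c // c ∈ FLayer (n-2)}) :
    (eAPhiTo hn h5 av hav a).val.2.val = upBase (pB av) a.val.1.val + 1 := rfl

def eAPhiInv (hn : n % 2 = 1) (h5 : 5 ≤ n) (av : ℕ) (hav : av ≤ n-2)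
    (c : {c // c ∈ (FLayer n).erase (u0Phi h5 av hav)}) : {c // c ∈ FLayer (n-2)} :=
  ⟨(⟨dnBase (pB av) c.val.1.val, by
      obtain ⟨hne, hmem⟩ := Finset.mem_erase.mp c.property
      obtain ⟨he, hs⟩ := (mem_FLayer _).mp hmem
      have h2 := c.val.2.isLt
      have hq : c.val.1.val ≠ pB av := by
        intro h
        exact hne ((comp_eq_iff _ _).mpr ⟨by rw [u0Phi_val1, h], by rw [u0Phi_val2]; omega⟩)
      unfold dnBase pB at *; split_ifs <;> omega⟩,
    ⟨dnBase (pB av) c.val.1.val + 1, by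
      obtain ⟨hne, hmem⟩ := Finset.mem_erase.mp c.property
      obtain ⟨he, hs⟩ := (mem_FLayer _).mp hmem
      have h2 := c.val.2.isLt
      have hq : c.val.1.val ≠ pB av := by
        intro h
        exact hne ((comp_eq_iff _ _).mpr ⟨by rw [u0Phi_val1, h], by rw [u0Phi_val2]; omega⟩)
      unfold dnBase pB at *; split_ifs <;> omega⟩), by
    obtain ⟨hne, hmem⟩ := Finset.mem_erase.mp c.property
    obtain ⟨he, hs⟩ := (mem_FLayer _).mp hmem
    have hq : c.val.1.val ≠ pB av := by
      intro h
      exact hne ((comp_eq_iff _ _).mpr ⟨by rw [u0Phi_val1, h], by rw [u0Phi_val2]; omega⟩)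
    rw [mem_FLayer]
    refine ⟨?_, rfl⟩
    show dnBase (pB av) c.val.1.val % 2 = 0
    unfold dnBase pB at *; split_ifs <;> omega⟩

lemma eAPhiInv_val1 (hn : n % 2 = 1) (h5 : 5 ≤ n) (av : ℕ) (hav : av ≤ n-2)
    (c : {c // c ∈ (FLayer n).erase (u0Phi h5 av hav)}) :
    (eAPhiInv hn h5 av hav c).val.1.val = dnBase (pB av) c.val.1.val := rfl

lemma eAPhiInv_val2 (hn : n % 2 = 1) (h5 : 5 ≤ n) (av : ℕ) (hav : av ≤ n-2)
    (c : {c // c ∈ (FLayer n).erase (u0Phi h5 av hav)}) :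
    (eAPhiInv hn h5 av hav c).val.2.val = dnBase (pB av) c.val.1.val + 1 := rfl

def eAPhi (hn : n % 2 = 1) (h5 : 5 ≤ n) (av : ℕ) (hav : av ≤ n-2) :
    {c // c ∈ FLayer (n-2)} ≃ {c // c ∈ (FLayer n).erase (u0Phi h5 av hav)} where
  toFun := eAPhiTo hn h5 av hav
  invFun := eAPhiInv hn h5 av hav
  left_inv a := by
    obtain ⟨he, hs⟩ := (mem_FLayer _).mp a.property
    apply Subtype.ext
    refine Prod.ext (Fin.ext ?_) (Fin.ext ?_)
    · rw [eAPhiInv_val1, eAPhiTo_val1, dn_up]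
    · rw [eAPhiInv_val2, eAPhiTo_val1, dn_up]
      omega
  right_inv c := by
    obtain ⟨hne, hmem⟩ := Finset.mem_erase.mp c.property
    obtain ⟨he, hs⟩ := (mem_FLayer _).mp hmem
    have hp := pB_even av
    have hq : c.val.1.val ≠ pB av := by
      intro h
      exact hne ((comp_eq_iff _ _).mpr ⟨by rw [u0Phi_val1, h], by rw [u0Phi_val2]; omega⟩)
    apply Subtype.ext
    refine Prod.ext (Fin.ext ?_) (Fin.ext ?_)
    · rw [eAPhiTo_val1, eAPhiInv_val1, up_dn _ _ hq he hp]
    · rw [eAPhiTo_val2, eAPhiInv_val1, up_dn _ _ hq he hp]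
      omega

lemma eAPhi_val1 (hn : n % 2 = 1) (h5 : 5 ≤ n) (av : ℕ) (hav : av ≤ n-2)
    (a : {c // c ∈ FLayer (n-2)}) :
    ((eAPhi hn h5 av hav) a).val.1.val = upBase (pB av) a.val.1.val := rfl

lemma eAPhi_val2 (hn : n % 2 = 1) (h5 : 5 ≤ n) (av : ℕ) (hav : av ≤ n-2)
    (a : {c // c ∈ FLayer (n-2)}) :
    ((eAPhi hn h5 av hav) a).val.2.val = upBase (pB av) a.val.1.val + 1 := rfl

noncomputable def eBPhi {L : Layer n} (hL : IsLayer L) {c0 : Comp n} (hc0 : c0 ∈ L)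
    (hlast : c0.2.val = n - 1) (h5 : 5 ≤ n) :
    {c // c ∈ L.erase c0} ≃ {c // c ∈ PhiM h5 c0.1.val L c0} :=
  Equiv.ofBijective (fun c => ⟨rhoC h5 c0.1.val c.val, Finset.mem_image_of_mem _ c.property⟩)
    (by
      have hav := c0_facts hL hc0 hlast
      constructor
      · intro c d heq
        have heq' : rhoC h5 c0.1.val c.val = rhoC h5 c0.1.val d.val :=
          congrArg Subtype.val heq
        obtain ⟨f1, f2, f3, f4, f5⟩ := chans_facts hL hc0 hlast h5 c.property
        obtain ⟨g1, g2, g3, g4, g5⟩ := chans_facts hL hc0 hlast h5 d.property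
        have hval : ∀ (x : Fin n), x.val ≤ n-2 → x.val ≠ c0.1.val →
            ∀ (y : Fin n), y.val ≤ n-2 → y.val ≠ c0.1.val →
            (rhoF h5 c0.1.val x).val = (rhoF h5 c0.1.val y).val → x = y := by
          intro x hx hxa y hy hya h
          rw [rhoF_val h5 _ hx hav, rhoF_val h5 _ hy hav] at h
          exact Fin.ext (rhoV_inj h5 hx hy hxa hya hav h)
        unfold rhoC at heq'
        apply Subtype.ext
        rcases sortC_cases (rhoF h5 c0.1.val c.val.1, rhoF h5 c0.1.val c.val.2) with hX | hX <;>
          rcases sortC_cases (rhoF h5 c0.1.val d.val.1, rhoF h5 c0.1.val d.val.2) with hY | hY <;>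
          rw [hX, hY] at heq' <;>
          [ (exact Prod.ext
              (hval _ f3 f1 _ g3 g1 (congrArg (fun z => z.1.val) heq'))
              (hval _ f4 f2 _ g4 g2 (congrArg (fun z => z.2.val) heq')));
            (exfalso
             have e1 := hval _ f3 f1 _ g4 g2 (congrArg (fun z => z.1.val) heq')
             have e2 := hval _ f4 f2 _ g3 g1 (congrArg (fun z => z.2.val) heq')
             have e1' := congrArg Fin.val e1
             have e2' := congrArg Fin.val e2
             omega);
            (exfalso
             have e1 := hval _ f4 f2 _ g3 g1 (congrArg (fun z => z.1.val) heq')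
             have e2 := hval _ f3 f1 _ g4 g2 (congrArg (fun z => z.2.val) heq')
             have e1' := congrArg Fin.val e1
             have e2' := congrArg Fin.val e2
             omega);
            (exact Prod.ext
              (hval _ f3 f1 _ g3 g1 (congrArg (fun z => z.2.val) heq'))
              (hval _ f4 f2 _ g4 g2 (congrArg (fun z => z.1.val) heq')))]
      · intro c
        obtain ⟨d, hd, hdc⟩ := Finset.mem_image.mp c.property
        exact ⟨⟨d, hd⟩, Subtype.ext hdc⟩)

lemma eBPhi_val {L : Layer n} (hL : IsLayer L) {c0 : Comp n} (hc0 : c0 ∈ L)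
    (hlast : c0.2.val = n - 1) (h5 : 5 ≤ n) (c : {c // c ∈ L.erase c0}) :
    ((eBPhi hL hc0 hlast h5) c).val = rhoC h5 c0.1.val c.val := rfl

noncomputable def sdPhi (hn : n % 2 = 1) (h5 : 5 ≤ n) {L : Layer n} (hL : IsLayer L)
    {c0 : Comp n} (hc0 : c0 ∈ L) (hlast : c0.2.val = n - 1) :
    SD (n-2) (FLayer (n-2)) (PhiM h5 c0.1.val L c0) (FLayer n) L
      (u0Phi h5 c0.1.val (c0_facts hL hc0 hlast)) c0 (decide (c0.1.val % 2 = 1)) where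
  hu0 := by
    rw [mem_FLayer]
    exact ⟨pB_even _, rfl⟩
  hv0 := hc0
  eA := eAPhi hn h5 c0.1.val (c0_facts hL hc0 hlast)
  eB := (eBPhi hL hc0 hlast h5).symm
  compat := by
    intro a c b
    obtain ⟨d, rfl⟩ := (eBPhi hL hc0 hlast h5).surjective c
    rw [Equiv.symm_apply_apply]
    obtain ⟨he, hs⟩ := (mem_FLayer _).mp a.property
    have h2 := a.val.2.isLt
    obtain ⟨f1, f2, f3, f4, f5⟩ := chans_facts hL hc0 hlast h5 d.property
    have hav := c0_facts hL hc0 hlast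
    rw [touch_val, touch_val, eBPhi_val, eAPhi_val1, eAPhi_val2]
    have hiff := sortC_or (rhoF h5 c0.1.val d.val.1, rhoF h5 c0.1.val d.val.2)
      (fun x => (if b then a.val.2.val else a.val.1.val) = x)
    refine Iff.trans hiff ?_
    rw [rhoF_val h5 _ f3 hav, rhoF_val h5 _ f4 hav]
    unfold rhoV upBase pB aPr
    cases b <;> simp <;> first | omega | (split_ifs <;> omega)
  hv0t := by
    intro a ha b
    rw [touch_val]
    obtain ⟨he, hs⟩ := (mem_FLayer _).mp ha
    have h2 := a.2.isLt
    rw [comp_eq_iff, u0Phi_val1, u0Phi_val2, hlast]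
    by_cases hone : c0.1.val % 2 = 1
    · rw [show (decide (c0.1.val % 2 = 1)) = true from by simp [hone]]
      unfold pB
      cases b <;> simp <;> first | omega | (split_ifs <;> omega)
    · rw [show (decide (c0.1.val % 2 = 1)) = false from by simp [hone]]
      unfold pB
      cases b <;> simp <;> first | omega | (split_ifs <;> omega)
  hu0t := by
    intro c b
    rw [Equiv.symm_symm, touch_val]
    obtain ⟨f1, f2, f3, f4, f5⟩ := chans_facts hL hc0 hlast h5 c.property
    have hav := c0_facts hL hc0 hlast
    have hfr : FreeT ((eBPhi hL hc0 hlast h5 c).val) ↔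
        ((rhoF h5 c0.1.val c.val.1).val = n-2-1 ∨ (rhoF h5 c0.1.val c.val.2).val = n-2-1) := by
      rw [eBPhi_val]
      show ((sortC _).1.val = n-2-1 ∨ (sortC _).2.val = n-2-1) ↔ _
      exact sortC_or _ (fun x => x = n-2-1)
    rw [hfr, rhoF_val h5 _ f3 hav, rhoF_val h5 _ f4 hav, u0Phi_val1, u0Phi_val2]
    by_cases hone : c0.1.val % 2 = 1
    · rw [show (decide (c0.1.val % 2 = 1)) = true from by simp [hone]]
      unfold rhoV pB aPr
      cases b <;> simp <;> first | omega | (split_ifs <;> omega)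
    · rw [show (decide (c0.1.val % 2 = 1)) = false from by simp [hone]]
      unfold rhoV pB aPr
      cases b <;> simp <;> first | omega | (split_ifs <;> omega)
  htwo := by
    intro c
    obtain ⟨f1, f2, f3, f4, f5⟩ := chans_facts hL hc0 hlast h5 c.property
    exact htwo_gen c.val (by omega) (by omega) (by omega)
  hfree := by
    intro c
    obtain ⟨d, hd, hdc⟩ := (mem_PhiM _ _ _ _ _).mp c.property
    refine freeT_iff_inOne (by omega) (by omega) c.val ?_
    rw [← hdc]
    obtain ⟨f1, f2, f3, f4, f5⟩ := chans_facts hL hc0 hlast h5 hd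
    exact rhoC_lt h5 (c0_facts hL hc0 hlast) f3 f4 f1 f2 (by omega)

/-- identity touch-compatible equivalence -/
def TC.rfl {k : ℕ} (A B : Layer k) : TC A B A B :=
  ⟨Equiv.refl _, Equiv.refl _, fun _ _ _ => Iff.rfl⟩

end Phi

/- ## assembly -/

noncomputable def QR (k : ℕ) :=
  Quot (fun L L' : SecondLayers k =>
    GraphIso ([FLayer k, L.val] : Net k) ([FLayer k, L'.val] : Net k))

lemma numClasses_eq_card (k : ℕ) : numClasses k = Nat.card (QR k) := rfl

lemma rel_equiv (k : ℕ) : Equivalence (fun L L' : SecondLayers k =>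
    GraphIso ([FLayer k, L.val] : Net k) ([FLayer k, L'.val] : Net k)) :=
  ⟨fun _ => GraphIso.refl' _, GraphIso.symm', GraphIso.trans'⟩

instance secondLayersFinite (k : ℕ) : Finite (SecondLayers k) := by
  unfold SecondLayers; exact Subtype.finite

instance qrFinite (k : ℕ) : Finite (QR k) :=
  Finite.of_surjective (Quot.mk _) Quot.mk_surjective

lemma htouch_all {k : ℕ} {B : Layer k} (hB : IsLayer B) (hk : 2 ≤ k) :
    ∀ c : {c // c ∈ B}, ∃ a, ∃ b : Bool, a ∈ FLayer k ∧ Touch a c.val b := by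
  intro c
  have h := hB.1 c.val c.property
  rw [Fin.lt_def] at h
  exact exists_touch c.val h hk

section Main

variable {n : ℕ}

def up2 (M : SecondLayers (n-1)) : SecondLayers n :=
  ⟨castLayer (Nat.sub_le n 1) M.val, isLayer_castLayer _ M.property⟩

def psi2 (hn : n % 2 = 1) (h5 : 5 ≤ n) (b0 : Bool) (M : SecondLayers (n-2)) : SecondLayers n :=
  ⟨PsiL h5 b0 M.val, isLayer_PsiL hn h5 b0 M.property⟩

lemma giso_up (hn : n % 2 = 1) (h5 : 5 ≤ n) (M : SecondLayers (n-1)) :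
    GraphIso ([FLayer n, (up2 M).val] : Net n) ([FLayer (n-1), M.val] : Net (n-1)) :=
  (tcU hn (by omega) M.val).graphIso

lemma giso_psi (hn : n % 2 = 1) (h5 : 5 ≤ n) (b0 : Bool) {M M' : SecondLayers (n-2)}
    (h : GraphIso ([FLayer (n-2), M.val] : Net (n-2)) ([FLayer (n-2), M'.val] : Net (n-2))) :
    GraphIso ([FLayer n, (psi2 hn h5 b0 M).val] : Net n)
      ([FLayer n, (psi2 hn h5 b0 M').val] : Net n) := by
  obtain ⟨t⟩ := tc_of_graphIso (htouch_all M.property (by omega))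
    (htouch_all M'.property (by omega)) h
  exact ((sdPsi hn h5 b0 M.val M.property).up (sdPsi hn h5 b0 M'.val M'.property) t).graphIso

noncomputable def psiFun (hn : n % 2 = 1) (h5 : 5 ≤ n) :
    QR (n-1) ⊕ (QR (n-2) ⊕ QR (n-2)) → QR n :=
  Sum.elim
    (Quot.lift (fun M => Quot.mk _ (up2 M)) (fun M M' h => Quot.sound
      ((giso_up hn h5 M).trans' (h.trans' (giso_up hn h5 M').symm'))))
    (Sum.elim
      (Quot.lift (fun M => Quot.mk _ (psi2 hn h5 false M)) (fun M M' h => Quot.sound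
        (giso_psi hn h5 false h)))
      (Quot.lift (fun M => Quot.mk _ (psi2 hn h5 true M)) (fun M M' h => Quot.sound
        (giso_psi hn h5 true h))))

lemma no_inOne_up {M : SecondLayers (n-1)} :
    ∀ c : {c // c ∈ (up2 M).val}, ¬ InOne (FLayer n) c.val := by
  intro c
  obtain ⟨d, hd, heq⟩ := Finset.mem_image.mp c.property
  rw [← heq]
  have hlt := M.property.1 d hd
  rw [Fin.lt_def] at hlt
  have b1 := d.1.isLt
  have b2 := d.2.isLt
  have e1 : (castComp (Nat.sub_le n 1) d).1.val = d.1.val := rfl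
  have e2 : (castComp (Nat.sub_le n 1) d).2.val = d.2.val := rfl
  apply not_inOne_gen <;> simp only [e1, e2] <;> omega

lemma no_inOne_up' {M : SecondLayers (n-1)} :
    ¬ ∃ c : {c // c ∈ (up2 M).val}, InOne (FLayer n) c.val := by
  rintro ⟨c, hc⟩
  exact no_inOne_up (n := n) c hc

lemma exists_inOne_psi (hn : n % 2 = 1) (h5 : 5 ≤ n) (b0 : Bool) (M : SecondLayers (n-2)) :
    ∃ c : {c // c ∈ (psi2 hn h5 b0 M).val}, InOne (FLayer n) c.val :=
  ⟨⟨v0C h5 b0, (sdPsi hn h5 b0 M.val M.property).hv0⟩,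
    (sdPsi hn h5 b0 M.val M.property).inOne_v0⟩

lemma tc_exists_inOne {k l : ℕ} {A B : Layer k} {A' B' : Layer l} (t : TC A B A' B')
    (h : ∃ c : {c // c ∈ B}, InOne A c.val) : ∃ c' : {c // c ∈ B'}, InOne A' c'.val := by
  obtain ⟨c, hc⟩ := h
  exact ⟨t.eB c, (t.inOne_iff c).mp hc⟩

lemma cross_case_absurd (hn : n % 2 = 1) (h5 : 5 ≤ n) (b0 : Bool)
    {M : SecondLayers (n-1)} {M' : SecondLayers (n-2)}
    (h : GraphIso ([FLayer n, (up2 M).val] : Net n)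
      ([FLayer n, (psi2 hn h5 b0 M').val] : Net n)) : False := by
  obtain ⟨t⟩ := tc_of_graphIso (htouch_all (up2 M).property (by omega))
    (htouch_all (psi2 hn h5 b0 M').property (by omega)) h
  exact no_inOne_up' (tc_exists_inOne t.symm (exists_inOne_psi hn h5 b0 M'))

lemma same_case_psi (hn : n % 2 = 1) (h5 : 5 ≤ n) {b0 b0' : Bool} {M M' : SecondLayers (n-2)}
    (h : GraphIso ([FLayer n, (psi2 hn h5 b0 M).val] : Net n)
      ([FLayer n, (psi2 hn h5 b0' M').val] : Net n)) :
    b0 = b0' ∧ GraphIso ([FLayer (n-2), M.val] : Net (n-2))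
      ([FLayer (n-2), M'.val] : Net (n-2)) := by
  obtain ⟨t⟩ := tc_of_graphIso (htouch_all (psi2 hn h5 b0 M).property (by omega))
    (htouch_all (psi2 hn h5 b0' M').property (by omega)) h
  obtain ⟨hb, ⟨ts⟩⟩ := (sdPsi hn h5 b0 M.val M.property).down
    (sdPsi hn h5 b0' M'.val M'.property) t
  exact ⟨hb, ts.graphIso⟩

lemma psiFun_injective (hn : n % 2 = 1) (h5 : 5 ≤ n) : Function.Injective (psiFun hn h5) := by
  have conv : ∀ (a b : SecondLayers n), Quot.mk (fun L L' : SecondLayers n =>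
      GraphIso ([FLayer n, L.val] : Net n) ([FLayer n, L'.val] : Net n)) a =
        Quot.mk _ b →
      GraphIso ([FLayer n, a.val] : Net n) ([FLayer n, b.val] : Net n) := by
    intro a b h
    exact ((rel_equiv n).eqvGen_iff).mp (Quot.eq.mp h)
  intro x y hxy
  rcases x with q | q | q <;> rcases y with r | r | r <;>
    obtain ⟨Mx, rfl⟩ := Quot.exists_rep q <;>
    obtain ⟨My, rfl⟩ := Quot.exists_rep r <;>
    have hrel := conv _ _ hxy
  · exact congrArg Sum.inl
      (Quot.sound ((giso_up hn h5 Mx).symm'.trans' (hrel.trans' (giso_up hn h5 My))))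
  · exact absurd hrel (fun h => cross_case_absurd hn h5 false h)
  · exact absurd hrel (fun h => cross_case_absurd hn h5 true h)
  · exact absurd hrel.symm' (fun h => cross_case_absurd hn h5 false h)
  · obtain ⟨-, hg⟩ := same_case_psi hn h5 hrel
    exact congrArg (fun z => Sum.inr (Sum.inl z)) (Quot.sound hg)
  · obtain ⟨hb, -⟩ := same_case_psi hn h5 hrel
    exact absurd hb (by simp)
  · exact absurd hrel.symm' (fun h => cross_case_absurd hn h5 true h)
  · obtain ⟨hb, -⟩ := same_case_psi hn h5 hrel
    exact absurd hb (by simp)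
  · obtain ⟨-, hg⟩ := same_case_psi hn h5 hrel
    exact congrArg (fun z => Sum.inr (Sum.inr z)) (Quot.sound hg)

lemma psiFun_surjective (hn : n % 2 = 1) (h5 : 5 ≤ n) : Function.Surjective (psiFun hn h5) := by
  intro q
  obtain ⟨L, rfl⟩ := Quot.exists_rep q
  by_cases hfree : ∀ c ∈ L.val, c.2.val ≠ n-1
  · obtain ⟨M, hM, hcast⟩ := exists_down (by omega) L.val L.property hfree
    exact ⟨Sum.inl (Quot.mk _ ⟨M, hM⟩), congrArg (Quot.mk _) (Subtype.ext hcast)⟩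
  · push_neg at hfree
    obtain ⟨c0, hc0, hlast⟩ := hfree
    have hphi := ((sdPsi hn h5 (decide (c0.1.val % 2 = 1)) (PhiM h5 c0.1.val L.val c0)
        (isLayer_PhiM L.property hc0 hlast h5)).up (sdPhi hn h5 L.property hc0 hlast)
        (TC.rfl _ _)).graphIso
    by_cases hb : c0.1.val % 2 = 1
    · refine ⟨Sum.inr (Sum.inr (Quot.mk _ ⟨PhiM h5 c0.1.val L.val c0,
        isLayer_PhiM L.property hc0 hlast h5⟩)), ?_⟩
      apply Quot.sound
      have hd : (decide (c0.1.val % 2 = 1)) = true := by simp [hb]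
      rw [hd] at hphi
      exact hphi
    · refine ⟨Sum.inr (Sum.inl (Quot.mk _ ⟨PhiM h5 c0.1.val L.val c0,
        isLayer_PhiM L.property hc0 hlast h5⟩)), ?_⟩
      apply Quot.sound
      have hd : (decide (c0.1.val % 2 = 1)) = false := by simp [hb]
      rw [hd] at hphi
      exact hphi

noncomputable def bigEquiv (hn : n % 2 = 1) (h5 : 5 ≤ n) :
    (QR (n-1) ⊕ (QR (n-2) ⊕ QR (n-2))) ≃ QR n :=
  Equiv.ofBijective _ ⟨psiFun_injective hn h5, psiFun_surjective hn h5⟩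

end Main

theorem numClasses_recurrence' (n : ℕ) (hodd : Odd n) (h5 : 5 ≤ n) :
    numClasses n = numClasses (n - 1) + 2 * numClasses (n - 2) := by
  have hn : n % 2 = 1 := Nat.odd_iff.mp hodd
  rw [numClasses_eq_card, numClasses_eq_card, numClasses_eq_card]
  calc Nat.card (QR n) = Nat.card (QR (n-1) ⊕ (QR (n-2) ⊕ QR (n-2))) :=
        (Nat.card_congr (bigEquiv hn h5)).symm
    _ = Nat.card (QR (n-1)) + 2 * Nat.card (QR (n-2)) := by
        rw [Nat.card_sum, Nat.card_sum]; ring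


/-- for odd n ≥ 5,
`|R(G_n)| = |R(G_{n-1})| + 2 |R(G_{n-2})|`. -/
theorem numClasses_recurrence (n : ℕ) (hodd : Odd n) (h5 : 5 ≤ n) :
    numClasses n = numClasses (n - 1) + 2 * numClasses (n - 2) :=
  numClasses_recurrence' n hodd h5

end SN
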